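/- Fix ε ∈ (0,1] and set λ_t = ε·t^{-3/4} for t ≥ 1. Given a sequence (j_t)_{t≥1} with j_t ∈ {0,1}, define sequences (x_t)_{t≥1} and (α_t)_{t≥1} recursively by: α_t = ∏_{s=1}^{t-1}(1 − x_s) (so α_1 = 1); R¹_{t-1} = max(0, ∑_{s=1}^{t-1} α_s x_s (1 − 2j_s)) and R²_{t-1} = max(0, ∑_{s=1}^{t-1} α_s (λ_s^{-1} x_s − 1)(1 − 2j_s)); and x_t = 0 if (R¹_{t-1}, R²_{t-1}) = (0,0), and x_t = λ_t²·R²_{t-1} / (R¹_{t-1} + λ_t·R²_{t-1}) otherwise. Then for every t ≥ 1: ∑_{s=1}^{t} α_s x_s (1 − 2j_s) ≤ 3ε. -/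

import Mathlib

open Finset

lemma quad_bound (u a : ℝ) : (max 0 (u+a))^2 ≤ (max 0 u)^2 + 2*(max 0 u)*a + a^2 := by
  rcases le_total (u+a) 0 with h | h
  · rw [max_eq_left h]
    nlinarith [le_max_left 0 u, le_max_right 0 u, sq_nonneg (max 0 u + a)]
  · rw [max_eq_right h]
    nlinarith [le_max_left 0 u, le_max_right 0 u]

lemma tele_step (t : ℕ) (ht : 1 ≤ t) :
    ((t+1:ℕ):ℝ)^(-(3:ℝ)/2) ≤ 2*((t:ℝ))^(-(1:ℝ)/2) - 2*((t+1:ℕ):ℝ)^(-(1:ℝ)/2) := by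
  have htp : (0:ℝ) < t := by exact_mod_cast ht
  have h1 : (0:ℝ) < (t:ℝ)+1 := by linarith
  set p := Real.sqrt t with hp
  set q := Real.sqrt ((t:ℝ)+1) with hq
  have hp2 : p^2 = t := Real.sq_sqrt htp.le
  have hq2 : q^2 = (t:ℝ)+1 := Real.sq_sqrt h1.le
  have hppos : 0 < p := Real.sqrt_pos.2 htp
  have hqpos : 0 < q := Real.sqrt_pos.2 h1
  have e1 : ((t:ℝ))^(-(1:ℝ)/2) = p⁻¹ := by
    rw [hp, Real.sqrt_eq_rpow, ← Real.rpow_neg htp.le]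
    norm_num
  have e2 : ((t+1:ℕ):ℝ)^(-(1:ℝ)/2) = q⁻¹ := by
    push_cast
    rw [hq, Real.sqrt_eq_rpow, ← Real.rpow_neg h1.le]
    norm_num
  have e3 : ((t+1:ℕ):ℝ)^(-(3:ℝ)/2) = (q^3)⁻¹ := by
    push_cast
    rw [hq, Real.sqrt_eq_rpow, ← Real.rpow_natCast (((t:ℝ)+1) ^ ((1:ℝ)/2)) 3,
      ← Real.rpow_mul h1.le, ← Real.rpow_neg h1.le]
    norm_num
  rw [e1, e2, e3]
  have hpq : p ≤ q := Real.sqrt_le_sqrt (by linarith)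
  have key : p * (1 + 2*q^2) ≤ 2*q^3 := by
    nlinarith [sq_nonneg (p*(1+2*q^2) - 2*q^3), sq_nonneg (p*(1+2*q^2) + 2*q^3), mul_pos hppos hqpos]
  rw [inv_eq_one_div, inv_eq_one_div, inv_eq_one_div, div_le_iff₀ (by positivity), sub_mul]
  have h4 : (1 + 2*q^2) ≤ (2*q^3)/p := (le_div_iff₀ hppos).2 (by linarith)
  have h5 : 2 * (1/q) * q^3 = 2*q^2 := by field_simp
  have h6 : 2 * (1/p) * q^3 = (2*q^3)/p := by ring
  rw [h5, h6]; linarith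

lemma tele_sum : ∀ t : ℕ, 1 ≤ t →
    ∑ s ∈ Icc 1 t, ((s:ℝ))^(-(3:ℝ)/2) ≤ 3 - 2*((t:ℝ))^(-(1:ℝ)/2) := by
  intro t ht
  induction t with
  | zero => omega
  | succ n ih =>
    rcases Nat.eq_or_lt_of_le ht with h | h
    · simp [← h]; norm_num
    · have hn : 1 ≤ n := by omega
      rw [Finset.sum_Icc_succ_top (by omega : 1 ≤ n + 1)]
      have := tele_step n hn
      have := ih hn
      push_cast at *
      linarith


set_option maxHeartbeats 2000000 in
/-- Cumulative first-component bound for Blackwell's algorithm in the auxiliary approachability problem of the Big Match: `∑_{s=1}^t α_s x_s (1 − 2j_s) ≤ 3ε` for every `t ≥ 1`. -/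
theorem big_match_first_component_bound
    (ε : ℝ) (hε : ε ∈ Set.Ioc (0 : ℝ) 1)
    (lam : ℕ → ℝ) (hlam : ∀ t : ℕ, 1 ≤ t → lam t = ε * (t : ℝ) ^ (-(3 : ℝ) / 4))
    (j : ℕ → ℝ) (hj : ∀ t, j t = 0 ∨ j t = 1)
    (x α : ℕ → ℝ)
    (hα : ∀ t, α t = ∏ s ∈ Finset.Icc 1 (t - 1), (1 - x s))
    (R1 R2 : ℕ → ℝ)
    (hR1 : ∀ t, R1 t = max 0 (∑ s ∈ Finset.Icc 1 t, α s * x s * (1 - 2 * j s)))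
    (hR2 : ∀ t, R2 t =
      max 0 (∑ s ∈ Finset.Icc 1 t, α s * ((lam s)⁻¹ * x s - 1) * (1 - 2 * j s)))
    (hx : ∀ t : ℕ, 1 ≤ t →
      x t = if R1 (t - 1) = 0 ∧ R2 (t - 1) = 0 then 0
        else lam t ^ 2 * R2 (t - 1) / (R1 (t - 1) + lam t * R2 (t - 1))) :
    ∀ t : ℕ, 1 ≤ t →
      ∑ s ∈ Finset.Icc 1 t, α s * x s * (1 - 2 * j s) ≤ 3 * ε := by
  obtain ⟨hε0, hε1⟩ := hε
  -- basic facts on lam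
  have hlampos : ∀ t : ℕ, 1 ≤ t → 0 < lam t := by
    intro t ht
    rw [hlam t ht]
    have : (0:ℝ) < t := by exact_mod_cast ht
    positivity
  have hlamle : ∀ t : ℕ, 1 ≤ t → lam t ≤ 1 := by
    intro t ht
    rw [hlam t ht]
    have h1 : (t:ℝ) ^ (-(3:ℝ)/4) ≤ 1 :=
      Real.rpow_le_one_of_one_le_of_nonpos (by exact_mod_cast ht) (by norm_num)
    have h2 : (0:ℝ) < (t:ℝ) ^ (-(3:ℝ)/4) := by
      have : (0:ℝ) < t := by exact_mod_cast ht
      positivity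
    nlinarith
  have hlammono : ∀ t : ℕ, 1 ≤ t → lam (t+1) ≤ lam t := by
    intro t ht
    rw [hlam t ht, hlam (t+1) (by omega)]
    have h1 : (0:ℝ) < t := by exact_mod_cast ht
    have h2 : ((t+1:ℕ):ℝ) ^ (-(3:ℝ)/4) ≤ (t:ℝ) ^ (-(3:ℝ)/4) := by
      apply Real.rpow_le_rpow_of_nonpos h1 (by push_cast; linarith) (by norm_num)
    nlinarith
  have hR1nn : ∀ t, 0 ≤ R1 t := fun t => (hR1 t) ▸ le_max_left 0 _
  have hR2nn : ∀ t, 0 ≤ R2 t := fun t => (hR2 t) ▸ le_max_left 0 _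
  -- bounds on x
  have hxb : ∀ t : ℕ, 1 ≤ t → 0 ≤ x t ∧ x t ≤ lam t := by
    intro t ht
    have hL := hlampos t ht
    rw [hx t ht]
    split_ifs with h
    · exact ⟨le_refl 0, hL.le⟩
    · set A := R1 (t-1) with hA
      set B := R2 (t-1) with hB
      have hAnn : 0 ≤ A := hR1nn _
      have hBnn : 0 ≤ B := hR2nn _
      constructor
      · apply div_nonneg (by positivity) (by positivity)
      · rcases eq_or_lt_of_le hBnn with hB0 | hB0
        · rw [← hB0]
          simp [hL.le]
        · have hden : 0 < A + lam t * B := by nlinarith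
          rw [div_le_iff₀ hden]
          nlinarith
  -- bounds on α
  have hαb : ∀ t : ℕ, 0 ≤ α t ∧ α t ≤ 1 := by
    intro t
    rw [hα t]
    constructor
    · apply Finset.prod_nonneg
      intro s hs
      have hs1 : 1 ≤ s := (Finset.mem_Icc.1 hs).1
      have h1 := (hxb s hs1).2
      have h2 := hlamle s hs1
      linarith
    · apply Finset.prod_le_one
      · intro s hs
        have hs1 : 1 ≤ s := (Finset.mem_Icc.1 hs).1
        have h1 := (hxb s hs1).2
        have h2 := hlamle s hs1
        linarith
      · intro s hs
        have hs1 : 1 ≤ s := (Finset.mem_Icc.1 hs).1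
        linarith [(hxb s hs1).1]
  have hj1 : ∀ s, (1 - 2*j s)^2 = 1 := by
    intro s; rcases hj s with h | h <;> rw [h] <;> norm_num
  -- the Blackwell inner product identity
  have hkey : ∀ t : ℕ, 1 ≤ t →
      R1 (t-1) * (α t * x t * (1 - 2 * j t))
        + lam t ^ 2 * R2 (t-1) * (α t * ((lam t)⁻¹ * x t - 1) * (1 - 2 * j t)) = 0 := by
    intro t ht
    have hL := hlampos t ht
    have hLne : lam t ≠ 0 := hL.ne'
    have hAnn : 0 ≤ R1 (t-1) := hR1nn _
    have hBnn : 0 ≤ R2 (t-1) := hR2nn _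
    have hxeq := hx t ht
    by_cases h : R1 (t-1) = 0 ∧ R2 (t-1) = 0
    · rw [h.1, h.2]; ring
    · rw [if_neg h] at hxeq
      have hden : R1 (t-1) + lam t * R2 (t-1) ≠ 0 := by
        intro h0
        have hB0 : R2 (t-1) = 0 := by nlinarith
        have hA0 : R1 (t-1) = 0 := by nlinarith
        exact h ⟨hA0, hB0⟩
      rw [hxeq]
      field_simp
      ring
  -- per-step norm bound
  have hnorm : ∀ t : ℕ, 1 ≤ t →
      (α t * x t * (1 - 2 * j t))^2
        + lam t ^ 2 * (α t * ((lam t)⁻¹ * x t - 1) * (1 - 2 * j t))^2 ≤ 2 * lam t ^ 2 := by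
    intro t ht
    have hL := hlampos t ht
    have hLne : lam t ≠ 0 := hL.ne'
    obtain ⟨hx0, hx1⟩ := hxb t ht
    obtain ⟨hα0, hα1⟩ := hαb t
    have hj2 := hj1 t
    have e1 : (α t * x t * (1 - 2 * j t))^2 = α t ^2 * x t ^2 := by
      rw [mul_pow, mul_pow, hj2]; ring
    have e2 : lam t ^ 2 * (α t * ((lam t)⁻¹ * x t - 1) * (1 - 2 * j t))^2
        = α t ^2 * (x t - lam t)^2 := by
      rw [mul_pow, mul_pow, hj2]
      field_simp
    rw [e1, e2]
    have hα2 : α t ^2 ≤ 1 := by nlinarith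
    have h1 : α t ^2 * x t ^2 ≤ x t ^2 := by nlinarith [sq_nonneg (x t)]
    have h2 : x t ^2 ≤ lam t ^2 := by nlinarith
    have h3 : α t ^2 * (x t - lam t)^2 ≤ (x t - lam t)^2 := by
      nlinarith [sq_nonneg (x t - lam t)]
    have h4 : (x t - lam t)^2 ≤ lam t ^2 := by nlinarith
    linarith
  -- per-step potential decrease
  have hstep : ∀ k : ℕ,
      R1 (k+1) ^2 + lam (k+2)^2 * R2 (k+1) ^2
        ≤ R1 k ^2 + lam (k+1) ^2 * R2 k ^2 + 2 * lam (k+1)^2 := by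
    intro k
    have ht : 1 ≤ k + 1 := by omega
    have hL := hlampos (k+1) ht
    have hsplit1 : ∑ s ∈ Icc 1 (k+1), α s * x s * (1 - 2 * j s)
        = (∑ s ∈ Icc 1 k, α s * x s * (1 - 2 * j s)) + α (k+1) * x (k+1) * (1 - 2 * j (k+1)) :=
      Finset.sum_Icc_succ_top (by omega) _
    have hsplit2 : ∑ s ∈ Icc 1 (k+1), α s * ((lam s)⁻¹ * x s - 1) * (1 - 2 * j s)
        = (∑ s ∈ Icc 1 k, α s * ((lam s)⁻¹ * x s - 1) * (1 - 2 * j s))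
          + α (k+1) * ((lam (k+1))⁻¹ * x (k+1) - 1) * (1 - 2 * j (k+1)) :=
      Finset.sum_Icc_succ_top (by omega) _
    have q1 : R1 (k+1) ^2 ≤ R1 k ^2 + 2 * R1 k * (α (k+1) * x (k+1) * (1 - 2 * j (k+1)))
        + (α (k+1) * x (k+1) * (1 - 2 * j (k+1)))^2 := by
      rw [hR1 (k+1), hR1 k, hsplit1]
      exact quad_bound _ _
    have q2 : R2 (k+1) ^2 ≤ R2 k ^2
        + 2 * R2 k * (α (k+1) * ((lam (k+1))⁻¹ * x (k+1) - 1) * (1 - 2 * j (k+1)))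
        + (α (k+1) * ((lam (k+1))⁻¹ * x (k+1) - 1) * (1 - 2 * j (k+1)))^2 := by
      rw [hR2 (k+1), hR2 k, hsplit2]
      exact quad_bound _ _
    have hmono : lam (k+2) ^2 ≤ lam (k+1) ^2 := by
      have h1 := hlammono (k+1) ht
      have h2 := hlampos (k+2) (by omega)
      nlinarith
    have hmono2 : lam (k+2)^2 * R2 (k+1)^2 ≤ lam (k+1)^2 * R2 (k+1)^2 :=
      mul_le_mul_of_nonneg_right hmono (sq_nonneg _)
    have q2' : lam (k+1)^2 * R2 (k+1) ^2 ≤ lam (k+1)^2 * (R2 k ^2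
        + 2 * R2 k * (α (k+1) * ((lam (k+1))⁻¹ * x (k+1) - 1) * (1 - 2 * j (k+1)))
        + (α (k+1) * ((lam (k+1))⁻¹ * x (k+1) - 1) * (1 - 2 * j (k+1)))^2) :=
      mul_le_mul_of_nonneg_left q2 (sq_nonneg _)
    have hk := hkey (k+1) ht
    have hn := hnorm (k+1) ht
    simp only [Nat.add_sub_cancel] at hk
    ring_nf at hk hn q1 q2' hmono2 ⊢
    linarith [hmono2, q1, q2', hk, hn]
  -- cumulative potential bound
  have hmain : ∀ t : ℕ, R1 t ^2 + lam (t+1)^2 * R2 t ^2 ≤ 2 * ∑ s ∈ Icc 1 t, lam s ^2 := by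
    intro t
    induction t with
    | zero =>
      have h1 : R1 0 = 0 := by rw [hR1 0]; simp
      have h2 : R2 0 = 0 := by rw [hR2 0]; simp
      rw [h1, h2]; simp
    | succ n ih =>
      have := hstep n
      rw [Finset.sum_Icc_succ_top (by omega : 1 ≤ n + 1)]
      linarith
  -- evaluate the lam sum
  have hlamsq : ∀ s : ℕ, 1 ≤ s → lam s ^2 = ε^2 * (s:ℝ)^(-(3:ℝ)/2) := by
    intro s hs
    have hsp : (0:ℝ) ≤ s := by positivity
    rw [hlam s hs, mul_pow]
    congr 1
    rw [← Real.rpow_natCast ((s:ℝ) ^ (-(3:ℝ)/4)) 2, ← Real.rpow_mul hsp]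
    norm_num
  have hsum : ∀ t : ℕ, 1 ≤ t → ∑ s ∈ Icc 1 t, lam s ^2 ≤ 3 * ε^2 := by
    intro t ht
    have h1 : ∑ s ∈ Icc 1 t, lam s ^2 = ε^2 * ∑ s ∈ Icc 1 t, ((s:ℝ))^(-(3:ℝ)/2) := by
      rw [Finset.mul_sum]
      apply Finset.sum_congr rfl
      intro s hs
      exact hlamsq s (Finset.mem_Icc.1 hs).1
    rw [h1]
    have h2 := tele_sum t ht
    have h3 : (0:ℝ) ≤ (t:ℝ)^(-(1:ℝ)/2) := by
      apply Real.rpow_nonneg; positivity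
    nlinarith
  -- conclude
  intro t ht
  have h1 := hmain t
  have h2 := hsum t ht
  have h3 : R1 t ^2 ≤ 6 * ε^2 := by
    have h4 : (0:ℝ) ≤ lam (t+1)^2 * R2 t ^2 := by positivity
    linarith
  have h5 : R1 t ≤ 3 * ε := by
    nlinarith [hR1nn t]
  calc ∑ s ∈ Finset.Icc 1 t, α s * x s * (1 - 2 * j s)
      ≤ R1 t := (hR1 t) ▸ le_max_right 0 _
    _ ≤ 3 * ε := h5
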